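/- For every real x > 0, e^{1/x}·(1 − 2x) + 2x + 1 > 0. -/

import Mathlib

private lemma aux1 (t : ℝ) (ht : 0 < t) : 0 < (t - 1) * Real.exp t + 1 := by
  have hmono : StrictMonoOn (fun s : ℝ => (s - 1) * Real.exp s + 1) (Set.Ici 0) := by
    apply strictMonoOn_of_deriv_pos (convex_Ici 0)
    · fun_prop
    · intro s hs
      rw [interior_Ici] at hs
      have hd : HasDerivAt (fun s : ℝ => (s - 1) * Real.exp s + 1)
          (s * Real.exp s) s := by
        have := (((hasDerivAt_id s).sub_const 1).mul (Real.hasDerivAt_exp s)).add_const 1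
        refine this.congr_deriv ?_
        simp only [id_eq]; ring
      rw [hd.deriv]
      exact mul_pos hs (Real.exp_pos s)
  have := hmono (Set.self_mem_Ici) (Set.mem_Ici.mpr ht.le) ht
  simpa using this

private lemma aux2 (t : ℝ) (ht : 0 < t) : 0 < (t - 2) * Real.exp t + t + 2 := by
  have hmono : StrictMonoOn (fun s : ℝ => (s - 2) * Real.exp s + s + 2) (Set.Ici 0) := by
    apply strictMonoOn_of_deriv_pos (convex_Ici 0)
    · fun_prop
    · intro s hs
      rw [interior_Ici] at hs
      have hd : HasDerivAt (fun s : ℝ => (s - 2) * Real.exp s + s + 2)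
          ((s - 1) * Real.exp s + 1) s := by
        have := ((((hasDerivAt_id s).sub_const 2).mul (Real.hasDerivAt_exp s)).add
          (hasDerivAt_id s)).add_const 2
        refine this.congr_deriv ?_
        simp only [id_eq]; ring
      rw [hd.deriv]
      exact aux1 s hs
  have := hmono (Set.self_mem_Ici) (Set.mem_Ici.mpr ht.le) ht
  simpa using this

theorem exp_one_div_key_inequality (x : ℝ) (hx : 0 < x) :
    0 < Real.exp (1 / x) * (1 - 2 * x) + 2 * x + 1 := by
  have h := aux2 (1 / x) (by positivity)
  have key : Real.exp (1 / x) * (1 - 2 * x) + 2 * x + 1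
      = x * ((1 / x - 2) * Real.exp (1 / x) + 1 / x + 2) := by
    field_simp
    ring
  rw [key]
  exact mul_pos hx h
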